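/- Let A(x) and B(x) be polynomials with coefficients in {0,1}, n = A(1)·B(1), and R the set of prime power divisors s > 1 of n. If for every divisor t > 1 of n, Φ_t(x) divides A(x) or B(x), then S_A and S_B are disjoint, S_A ∪ S_B = R, A(1) = ∏_{s∈S_A} Φ_s(1), and B(1) = ∏_{s∈S_B} Φ_s(1). -/

import Mathlib

open Polynomial

private lemma prod_primes_dvd'' {α : Type*} [CommMonoidWithZero α] (N : α) (f : ℕ → α) :
    ∀ S : Finset ℕ, (∀ i ∈ S, Prime (f i)) →
      (∀ i ∈ S, ∀ j ∈ S, i ≠ j → ¬ f i ∣ f j) →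
      (∀ i ∈ S, f i ∣ N) → ∏ i ∈ S, f i ∣ N := by
  intro S
  classical
  induction S using Finset.induction_on with
  | empty => intro _ _ _; simp
  | @insert a S ha ih =>
    intro hp hnd hd
    rw [Finset.prod_insert ha]
    have hPd : ∏ i ∈ S, f i ∣ N :=
      ih (fun i hi => hp i (Finset.mem_insert_of_mem hi))
        (fun i hi j hj hij =>
          hnd i (Finset.mem_insert_of_mem hi) j (Finset.mem_insert_of_mem hj) hij)
        (fun i hi => hd i (Finset.mem_insert_of_mem hi))
    obtain ⟨c, hc⟩ := hPd
    have hpa : Prime (f a) := hp a (Finset.mem_insert_self a S)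
    have hfa : f a ∣ N := hd a (Finset.mem_insert_self a S)
    have hnp : ¬ f a ∣ ∏ i ∈ S, f i := by
      intro hdvd
      obtain ⟨i, hi, hdi⟩ := (hpa.dvd_finset_prod_iff f).mp hdvd
      exact hnd a (Finset.mem_insert_self a S) i (Finset.mem_insert_of_mem hi)
        (fun hai => ha (hai ▸ hi)) hdi
    have : f a ∣ c := by
      rcases hpa.dvd_mul.mp (hc ▸ hfa) with h1 | h1
      · exact absurd h1 hnp
      · exact h1
    obtain ⟨d, rfl⟩ := this
    exact ⟨d, by rw [hc, mul_left_comm, mul_assoc]⟩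

private lemma eval_one_cyclo_ppow {s : ℕ} (hs : IsPrimePow s) :
    (cyclotomic s ℤ).eval 1 = (s.minFac : ℤ) := by
  obtain ⟨p, k, hp, hk, rfl⟩ := hs
  have hp' : p.Prime := Nat.prime_iff.mpr hp
  haveI : Fact p.Prime := ⟨hp'⟩
  obtain ⟨m, rfl⟩ := Nat.exists_eq_succ_of_ne_zero hk.ne'
  rw [hp'.pow_minFac (Nat.succ_ne_zero m)]
  exact eval_one_cyclotomic_prime_pow m

private lemma cyclo_not_dvd {s t : ℕ} (hs : 0 < s) (ht : 0 < t) (hst : s ≠ t) :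
    ¬ cyclotomic s ℤ ∣ cyclotomic t ℤ := by
  intro hdvd
  obtain ⟨c, hc⟩ := hdvd
  have hirr_s := cyclotomic.irreducible hs
  have hirr_t := cyclotomic.irreducible ht
  have hu : IsUnit c := (hirr_t.isUnit_or_isUnit hc).resolve_left hirr_s.not_isUnit
  have hassoc : Associated (cyclotomic s ℤ) (cyclotomic t ℤ) :=
    ⟨hu.unit, by rw [IsUnit.unit_spec]; exact hc.symm⟩
  exact hst (cyclotomic_injective
    (eq_of_monic_of_associated (cyclotomic.monic s ℤ) (cyclotomic.monic t ℤ) hassoc))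

private lemma factorization_prod_minFac (S : Finset ℕ) (hS : ∀ s ∈ S, IsPrimePow s) (p : ℕ) :
    (∏ s ∈ S, s.minFac).factorization p =
      (S.filter (fun s => s.minFac = p)).card := by
  classical
  rw [Nat.factorization_prod (fun s _ => (Nat.minFac_pos _).ne'), Finset.card_filter]
  rw [Finsupp.finset_sum_apply]
  apply Finset.sum_congr rfl
  intro s hs
  have hprime : (s.minFac).Prime := Nat.minFac_prime (hS s hs).one_lt.ne'
  rw [hprime.factorization, Finsupp.single_apply]

theorem cyclotomic_split (A B : Polynomial ℤ)
    (hA01 : ∀ i : ℕ, A.coeff i = 0 ∨ A.coeff i = 1)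
    (hB01 : ∀ i : ℕ, B.coeff i = 0 ∨ B.coeff i = 1)
    (n : ℕ) (hn : (n : ℤ) = A.eval 1 * B.eval 1)
    (R : Finset ℕ) (hR : ∀ s : ℕ, s ∈ R ↔ (IsPrimePow s ∧ s ∣ n))
    (SA : Finset ℕ) (hSA : ∀ s : ℕ, s ∈ SA ↔ (IsPrimePow s ∧ cyclotomic s ℤ ∣ A))
    (SB : Finset ℕ) (hSB : ∀ s : ℕ, s ∈ SB ↔ (IsPrimePow s ∧ cyclotomic s ℤ ∣ B))
    (h : ∀ t : ℕ, t ∣ n → 1 < t → cyclotomic t ℤ ∣ A ∨ cyclotomic t ℤ ∣ B) :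
    Disjoint SA SB ∧ SA ∪ SB = R ∧
    A.eval 1 = ∏ s ∈ SA, (cyclotomic s ℤ).eval 1 ∧
    B.eval 1 = ∏ s ∈ SB, (cyclotomic s ℤ).eval 1 := by
  classical
  -- n ≠ 0
  have hn0 : n ≠ 0 := by
    intro h0
    subst h0
    set m := R.sup id with hm
    have h2 : 2 ^ (m + 1) ∈ R :=
      (hR _).mpr ⟨⟨2, m + 1, Nat.prime_iff.mp Nat.prime_two, Nat.succ_pos m, rfl⟩, dvd_zero _⟩
    have hle : 2 ^ (m + 1) ≤ m := Finset.le_sup (f := id) h2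
    have : m < 2 ^ (m + 1) :=
      lt_of_lt_of_le (Nat.lt_two_pow_self (n := m)) (Nat.pow_le_pow_right (by norm_num) (Nat.le_succ m))
    omega
  -- positivity of evaluations
  have hA1 : 0 ≤ A.eval 1 := by
    rw [Polynomial.eval_eq_sum_range]
    apply Finset.sum_nonneg
    intro i _
    rcases hA01 i with h1 | h1 <;> simp [h1]
  have hB1 : 0 ≤ B.eval 1 := by
    rw [Polynomial.eval_eq_sum_range]
    apply Finset.sum_nonneg
    intro i _
    rcases hB01 i with h1 | h1 <;> simp [h1]
  set a : ℕ := (A.eval 1).toNat with haDef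
  set b : ℕ := (B.eval 1).toNat with hbDef
  have hacast : (a : ℤ) = A.eval 1 := Int.toNat_of_nonneg hA1
  have hbcast : (b : ℤ) = B.eval 1 := Int.toNat_of_nonneg hB1
  have hab : a * b = n := by
    have : ((a * b : ℕ) : ℤ) = (n : ℤ) := by push_cast; rw [hacast, hbcast, hn]
    exact_mod_cast this
  have ha0 : a ≠ 0 := fun h0 => hn0 (by rw [← hab, h0, zero_mul])
  have hb0 : b ≠ 0 := fun h0 => hn0 (by rw [← hab, h0, mul_zero])
  -- prime power facts
  have hUpp : ∀ s ∈ SA ∪ SB, IsPrimePow s := by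
    intro s hs
    rcases Finset.mem_union.mp hs with hs | hs
    · exact ((hSA s).mp hs).1
    · exact ((hSB s).mp hs).1
  have hRpp : ∀ s ∈ R, IsPrimePow s := fun s hs => ((hR s).mp hs).1
  have hRsub : R ⊆ SA ∪ SB := by
    intro s hs
    obtain ⟨hpp, hdvd⟩ := (hR s).mp hs
    rcases h s hdvd hpp.one_lt with hdA | hdB
    · exact Finset.mem_union_left _ ((hSA s).mpr ⟨hpp, hdA⟩)
    · exact Finset.mem_union_right _ ((hSB s).mpr ⟨hpp, hdB⟩)
  -- product of cyclotomics divides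
  have hprod : ∀ (S : Finset ℕ) (C : Polynomial ℤ), (∀ s ∈ S, IsPrimePow s) →
      (∀ s ∈ S, cyclotomic s ℤ ∣ C) → ∏ s ∈ S, cyclotomic s ℤ ∣ C := by
    intro S C hpp hdvd
    apply prod_primes_dvd'' C _ S
    · intro i hi
      exact (UniqueFactorizationMonoid.irreducible_iff_prime).mp
        (cyclotomic.irreducible (hpp i hi).pos)
    · intro i hi j hj hij
      exact cyclo_not_dvd (hpp i hi).pos (hpp j hj).pos hij
    · exact hdvd
  -- cast identity for products of minFac
  have hcastprod : ∀ S : Finset ℕ, (∀ s ∈ S, IsPrimePow s) →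
      ((∏ s ∈ S, s.minFac : ℕ) : ℤ) = ∏ s ∈ S, (cyclotomic s ℤ).eval 1 := by
    intro S hpp
    rw [Nat.cast_prod]
    exact Finset.prod_congr rfl fun s hs => (eval_one_cyclo_ppow (hpp s hs)).symm
  set PA : ℕ := ∏ s ∈ SA, s.minFac with hPA
  set PB : ℕ := ∏ s ∈ SB, s.minFac with hPB
  have hSApp : ∀ s ∈ SA, IsPrimePow s := fun s hs => ((hSA s).mp hs).1
  have hSBpp : ∀ s ∈ SB, IsPrimePow s := fun s hs => ((hSB s).mp hs).1
  have hPAdvd : PA ∣ a := by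
    have h1 : ∏ s ∈ SA, cyclotomic s ℤ ∣ A :=
      hprod SA A hSApp (fun s hs => ((hSA s).mp hs).2)
    have h2 : (PA : ℤ) ∣ A.eval 1 := by
      rw [hcastprod SA hSApp, ← Polynomial.eval_prod]
      exact Polynomial.eval_dvd h1
    rw [← hacast] at h2
    exact_mod_cast h2
  have hPBdvd : PB ∣ b := by
    have h1 : ∏ s ∈ SB, cyclotomic s ℤ ∣ B :=
      hprod SB B hSBpp (fun s hs => ((hSB s).mp hs).2)
    have h2 : (PB : ℤ) ∣ B.eval 1 := by
      rw [hcastprod SB hSBpp, ← Polynomial.eval_prod]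
      exact Polynomial.eval_dvd h1
    rw [← hbcast] at h2
    exact_mod_cast h2
  -- T = n where T = prod over R of minFac
  set T : ℕ := ∏ s ∈ R, s.minFac with hT
  have hT0 : T ≠ 0 := Finset.prod_ne_zero_iff.mpr fun s _ => (Nat.minFac_pos s).ne'
  have hfiltR : ∀ p : ℕ, p.Prime →
      R.filter (fun s => s.minFac = p) = (Finset.Icc 1 (n.factorization p)).image (p ^ ·) := by
    intro p hp
    ext s
    simp only [Finset.mem_filter, Finset.mem_image, Finset.mem_Icc, hR]
    constructor
    · rintro ⟨⟨hpp, hdvd⟩, hmin⟩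
      have hs1 : s ≠ 1 := hpp.one_lt.ne'
      have hkey : p ^ s.factorization p = s := by
        conv_rhs => rw [← hpp.minFac_pow_factorization_eq]
        rw [hmin]
      refine ⟨s.factorization p, ⟨?_, ?_⟩, hkey⟩
      · rcases Nat.eq_zero_or_pos (s.factorization p) with h0 | h0
        · rw [h0, pow_zero] at hkey; exact absurd hkey.symm hs1
        · exact h0
      · exact (Nat.Prime.pow_dvd_iff_le_factorization hp hn0).mp (by rw [hkey]; exact hdvd)
    · rintro ⟨j, ⟨hj1, hj2⟩, rfl⟩
      refine ⟨⟨⟨p, j, Nat.prime_iff.mp hp, hj1, rfl⟩,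
        (Nat.Prime.pow_dvd_iff_le_factorization hp hn0).mpr hj2⟩, hp.pow_minFac (Nat.one_le_iff_ne_zero.mp hj1)⟩
  have hTfact : ∀ p : ℕ, T.factorization p = n.factorization p := by
    intro p
    by_cases hp : p.Prime
    · rw [factorization_prod_minFac R hRpp p, hfiltR p hp,
        Finset.card_image_of_injective _ (Nat.pow_right_injective hp.two_le), Nat.card_Icc]
      omega
    · rw [Nat.factorization_eq_zero_of_not_prime _ hp, Nat.factorization_eq_zero_of_not_prime _ hp]
  have hTn : T = n := by
    apply Nat.dvd_antisymm
    · exact (Nat.factorization_le_iff_dvd hT0 hn0).mp (fun p => le_of_eq (hTfact p))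
    · exact (Nat.factorization_le_iff_dvd hn0 hT0).mp (fun p => le_of_eq (hTfact p).symm)
  set Q : ℕ := ∏ s ∈ SA ∪ SB, s.minFac with hQ
  have hnQ : n ∣ Q := hTn ▸ Finset.prod_dvd_prod_of_subset R (SA ∪ SB) _ hRsub
  have hunion : Q * (∏ s ∈ SA ∩ SB, s.minFac) = PA * PB := Finset.prod_union_inter
  have hQPP : Q ∣ PA * PB := ⟨_, hunion.symm⟩
  have hPPn : PA * PB ∣ n := hab ▸ mul_dvd_mul hPAdvd hPBdvd
  have hPPeq : PA * PB = n := Nat.dvd_antisymm hPPn (dvd_trans hnQ hQPP)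
  have hQn : Q = n := Nat.dvd_antisymm (dvd_trans hQPP hPPn) hnQ
  have hinter1 : (∏ s ∈ SA ∩ SB, s.minFac) = 1 := by
    have := hunion
    rw [hQn, hPPeq] at this
    have hn0' : 0 < n := Nat.pos_of_ne_zero hn0
    nlinarith
  -- Disjoint
  have hdisj : Disjoint SA SB := by
    rw [Finset.disjoint_left]
    intro x hxA hxB
    have hx : x ∈ SA ∩ SB := Finset.mem_inter.mpr ⟨hxA, hxB⟩
    have hdvd1 : x.minFac ∣ 1 := hinter1 ▸ Finset.dvd_prod_of_mem _ hx
    have := (Nat.minFac_prime (hSApp x hxA).one_lt.ne').two_le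
    have := Nat.le_of_dvd one_pos hdvd1
    omega
  -- Union ⊆ R
  have hUsub : SA ∪ SB ⊆ R := by
    intro s hs
    have hpp := hUpp s hs
    have hp : (s.minFac).Prime := Nat.minFac_prime hpp.one_lt.ne'
    set p := s.minFac with hpdef
    set k := s.factorization p with hk
    have hkey : p ^ k = s := hpp.minFac_pow_factorization_eq
    have hk1 : 1 ≤ k := by
      rcases Nat.eq_zero_or_pos k with h0 | h0
      · rw [h0, pow_zero] at hkey; exact absurd hkey.symm hpp.one_lt.ne'
      · exact h0
    set m := n.factorization p with hmdef
    have hFcard : (((SA ∪ SB).filter (fun t => t.minFac = p)).card) = m := by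
      rw [← factorization_prod_minFac (SA ∪ SB) hUpp p, ← hQ, hQn]
    have himg : (Finset.Icc 1 m).image (p ^ ·) ⊆ (SA ∪ SB).filter (fun t => t.minFac = p) := by
      intro t ht
      obtain ⟨j, hj, rfl⟩ := Finset.mem_image.mp ht
      obtain ⟨hj1, hj2⟩ := Finset.mem_Icc.mp hj
      refine Finset.mem_filter.mpr ⟨hRsub ((hR _).mpr ⟨⟨p, j, Nat.prime_iff.mp hp, hj1, rfl⟩,
        (Nat.Prime.pow_dvd_iff_le_factorization hp hn0).mpr hj2⟩), hp.pow_minFac (Nat.one_le_iff_ne_zero.mp hj1)⟩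
    have hkm : k ≤ m := by
      by_contra hkm
      push_neg at hkm
      have hsmem : s ∈ (SA ∪ SB).filter (fun t => t.minFac = p) :=
        Finset.mem_filter.mpr ⟨hs, rfl⟩
      have hsnot : s ∉ (Finset.Icc 1 m).image (p ^ ·) := by
        intro hcon
        obtain ⟨j, hj, hjs⟩ := Finset.mem_image.mp hcon
        obtain ⟨_, hj2⟩ := Finset.mem_Icc.mp hj
        have : j = k := Nat.pow_right_injective hp.two_le (hjs.trans hkey.symm)
        omega
      have hins : insert s ((Finset.Icc 1 m).image (p ^ ·)) ⊆
          (SA ∪ SB).filter (fun t => t.minFac = p) :=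
        Finset.insert_subset hsmem himg
      have hcard := Finset.card_le_card hins
      rw [Finset.card_insert_of_notMem hsnot,
        Finset.card_image_of_injective _ (Nat.pow_right_injective hp.two_le),
        Nat.card_Icc, hFcard] at hcard
      omega
    exact (hR s).mpr ⟨hpp, by rw [← hkey]; exact (Nat.Prime.pow_dvd_iff_le_factorization hp hn0).mpr hkm⟩
  -- a = PA, b = PB
  obtain ⟨u, hu⟩ := hPAdvd
  obtain ⟨v, hv⟩ := hPBdvd
  have huv : u * v = 1 := by
    have h1 : PA * PB * (u * v) = PA * PB * 1 := by
      calc PA * PB * (u * v) = (PA * u) * (PB * v) := by ring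
        _ = a * b := by rw [← hu, ← hv]
        _ = n := hab
        _ = PA * PB * 1 := by rw [mul_one, hPPeq]
    have h2 : PA * PB ≠ 0 := by rw [hPPeq]; exact hn0
    exact Nat.eq_of_mul_eq_mul_left (Nat.pos_of_ne_zero h2) h1
  have hu1 : u = 1 := Nat.eq_one_of_mul_eq_one_right huv
  have hv1 : v = 1 := Nat.eq_one_of_mul_eq_one_left huv
  have haPA : a = PA := by rw [hu, hu1, mul_one]
  have hbPB : b = PB := by rw [hv, hv1, mul_one]
  refine ⟨hdisj, Finset.Subset.antisymm hUsub hRsub, ?_, ?_⟩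
  · rw [← hacast, haPA, hcastprod SA hSApp]
  · rw [← hbcast, hbPB, hcastprod SB hSBpp]
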